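/- Positivity preserving property of the discrete porosity (difference quotient bound): under the stated assumptions, the sequence (Ψ_n) produced by the implicit Euler porosity scheme satisfies 0 ≤ (Ψ_{n+1} − Ψ_n)/Δt < α k_c a_0 / (ρ_s (1 − φ_0)) for every n ≥ 0. -/
import Mathlib


/-- Positivity preserving property of the discrete porosity (difference quotient
bound): the sequence `Ψ` produced by the implicit Euler porosity scheme satisfies
`0 ≤ (Ψ_{n+1} − Ψ_n)/Δt < α k_c a_0 / (ρ_s (1 − φ_0))` for every `n ≥ 0`. -/
theorem stmt_3 (α kc a0 ρs : ℝ) (hα : 0 < α) (hkc : 0 < kc) (ha0 : 0 < a0)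
    (hρs : 0 < ρs)
    (ks : ℝ → ℝ) (hks : ∀ s, 0 < ks s)
    (Δt : ℝ) (hΔt : 0 < Δt)
    (φlo φhi φ0 : ℝ) (hφlo : 0 < φlo) (hφlohi : φlo ≤ φhi) (hφhi : φhi < 1)
    (hφ0lo : φlo ≤ φ0) (hφ0hi : φ0 ≤ φhi)
    (Z C Ψ : ℕ → ℝ) (hΨ0 : Ψ 0 = φ0)
    (hscheme : ∀ n : ℕ,
      (Ψ (n + 1) - Ψ n) / Δt =
        (α * kc * a0 / ρs) * (1 - 1 / (1 + ks (Z n) / kc))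
          * ((1 - Ψ (n + 1)) / (1 - φ0)) * max 0 (min (C n) 1)) :
    ∀ n : ℕ, 0 ≤ (Ψ (n + 1) - Ψ n) / Δt ∧
      (Ψ (n + 1) - Ψ n) / Δt < α * kc * a0 / (ρs * (1 - φ0)) := by
  have hχ : 0 < α * kc * a0 / ρs := by positivity
  have hφ0pos : 0 < φ0 := lt_of_lt_of_le hφlo hφ0lo
  have hφ0lt : φ0 < 1 := lt_of_le_of_lt hφ0hi hφhi
  have h1φ : 0 < 1 - φ0 := by linarith
  -- properties of the kinetic factor
  have hf : ∀ n, 0 < 1 - 1 / (1 + ks (Z n) / kc) ∧ 1 - 1 / (1 + ks (Z n) / kc) < 1 := by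
    intro n
    have hr : 0 < ks (Z n) / kc := div_pos (hks _) hkc
    have h1 : (1:ℝ) < 1 + ks (Z n) / kc := by linarith
    have h2 : 1 / (1 + ks (Z n) / kc) < 1 := by
      rw [div_lt_one (by linarith)]; linarith
    have h3 : 0 < 1 / (1 + ks (Z n) / kc) := by positivity
    exact ⟨by linarith, by linarith⟩
  have hc : ∀ n, 0 ≤ max 0 (min (C n) 1) ∧ max 0 (min (C n) 1) ≤ 1 := by
    intro n
    refine ⟨le_max_left _ _, ?_⟩
    apply max_le (by norm_num)
    exact le_trans (min_le_right _ _) le_rfl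
  -- the implicit relation in product form
  have hb : ∀ n, Ψ (n + 1) - Ψ n =
      (Δt * ((α * kc * a0 / ρs) * (1 - 1 / (1 + ks (Z n) / kc)) * max 0 (min (C n) 1))
        / (1 - φ0)) * (1 - Ψ (n + 1)) := by
    intro n
    have h := hscheme n
    rw [div_eq_iff (ne_of_gt hΔt)] at h
    field_simp at h ⊢
    linarith [h]
  have hbpos : ∀ n, 0 ≤
      Δt * ((α * kc * a0 / ρs) * (1 - 1 / (1 + ks (Z n) / kc)) * max 0 (min (C n) 1))
        / (1 - φ0) := by
    intro n
    have := (hf n).1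
    have := (hc n).1
    positivity
  -- main invariant
  have key : ∀ n, φ0 ≤ Ψ n ∧ Ψ n < 1 := by
    intro n
    induction n with
    | zero => exact ⟨le_of_eq hΨ0.symm, by rw [hΨ0]; exact hφ0lt⟩
    | succ n ih =>
      set b := Δt * ((α * kc * a0 / ρs) * (1 - 1 / (1 + ks (Z n) / kc)) * max 0 (min (C n) 1))
        / (1 - φ0) with hbdef
      have h := hb n
      have hb0 := hbpos n
      have hid : (1 - Ψ (n + 1)) * (1 + b) = 1 - Ψ n := by linear_combination -h
      have hlt1 : Ψ (n + 1) < 1 := by nlinarith [ih.2]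
      have hge : φ0 ≤ Ψ (n + 1) := by nlinarith [ih.1, ih.2]
      exact ⟨hge, hlt1⟩
  intro n
  rw [hscheme n]
  obtain ⟨hfn0, hfn1⟩ := hf n
  obtain ⟨hcn0, hcn1⟩ := hc n
  obtain ⟨hge, hlt⟩ := key (n + 1)
  have hΨ1 : 0 ≤ 1 - Ψ (n + 1) := by linarith
  have hΨ2 : 1 - Ψ (n + 1) ≤ 1 - φ0 := by linarith
  constructor
  · have : 0 ≤ (1 - Ψ (n + 1)) / (1 - φ0) := by positivity
    positivity
  · have hg1 : (1 - Ψ (n + 1)) / (1 - φ0) ≤ 1 := by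
      rw [div_le_one h1φ]; exact hΨ2
    have hg0 : 0 ≤ (1 - Ψ (n + 1)) / (1 - φ0) := by positivity
    have key2 : (1 - 1 / (1 + ks (Z n) / kc)) * ((1 - Ψ (n + 1)) / (1 - φ0))
        * max 0 (min (C n) 1) < 1 := by
      have hGC : (1 - Ψ (n + 1)) / (1 - φ0) * max 0 (min (C n) 1) ≤ 1 :=
        mul_le_one₀ hg1 hcn0 hcn1
      nlinarith [mul_le_of_le_one_right hfn0.le hGC, hfn1]
    calc α * kc * a0 / ρs * (1 - 1 / (1 + ks (Z n) / kc))
          * ((1 - Ψ (n + 1)) / (1 - φ0)) * max 0 (min (C n) 1)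
        = (α * kc * a0 / ρs) * ((1 - 1 / (1 + ks (Z n) / kc))
            * ((1 - Ψ (n + 1)) / (1 - φ0)) * max 0 (min (C n) 1)) := by ring
      _ < (α * kc * a0 / ρs) * 1 := mul_lt_mul_of_pos_left key2 hχ
      _ ≤ α * kc * a0 / (ρs * (1 - φ0)) := by
          rw [mul_one, div_le_div_iff₀ hρs (by positivity)]
          nlinarith [mul_pos (mul_pos (mul_pos hα hkc) ha0) hρs,
            mul_nonneg (mul_nonneg (mul_nonneg hα.le hkc.le) ha0.le)
              (mul_nonneg hρs.le hφ0pos.le)]
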